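/- Let M be a manifold admitting a decomposition M = ⋃_{α<ω₁} U_α, where each U_α is open and separable, cl(U_α) ⊆ U_β whenever α < β, and U_λ = ⋃_{α<λ} U_α for every limit ordinal λ < ω₁. Let ℱ be a foliation on M all of whose leaves are metrisable in the leaf topology. Then C = {α < ω₁ : U_α is saturated by ℱ} is a closed unbounded subset of ω₁ (with its order topology). -/

import Mathlib

noncomputable section

open Set Topology Filter

universe u

/-! ### The long ray and the long line -/

/-- The first uncountable ordinal `ω₁`, viewed as the linearly ordered set of all
countable ordinals. -/
def Omega1 : Type 1 := {o : Ordinal.{0} // o < (Cardinal.aleph 1).ord}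

instance : LinearOrder Omega1 :=
  inferInstanceAs (LinearOrder {o : Ordinal.{0} // o < (Cardinal.aleph 1).ord})

/-- `ω₁` carries the order topology. -/
instance : TopologicalSpace Omega1 := Preorder.topology Omega1

instance : OrderTopology Omega1 := ⟨rfl⟩

/-- The underlying countable ordinal of an element of `ω₁`. -/
def Omega1.toOrdinal : Omega1 → Ordinal.{0} := Subtype.val

/-- The closed long ray `𝕃≥0`: the set `ω₁ × [0,1)` with the lexicographic order and the
order topology. -/
def ClosedLongRay : Type 1 := Omega1 ×ₗ (Set.Ico (0:ℝ) 1)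

instance : LinearOrder ClosedLongRay :=
  inferInstanceAs (LinearOrder (Omega1 ×ₗ (Set.Ico (0:ℝ) 1)))

instance : TopologicalSpace ClosedLongRay := Preorder.topology ClosedLongRay

instance : OrderTopology ClosedLongRay := ⟨rfl⟩

/-- The long ray `𝕃₊`: the closed long ray with its least element removed, with the
subspace topology (an element is non-minimal iff something is below it). -/
def LongRay : Type 1 := {x : ClosedLongRay // ∃ y, y < x}

instance : LinearOrder LongRay :=
  inferInstanceAs (LinearOrder {x : ClosedLongRay // ∃ y, y < x})

instance : TopologicalSpace LongRay :=
  inferInstanceAs (TopologicalSpace {x : ClosedLongRay // ∃ y, y < x})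

/-- The inclusion of the long ray into the closed long ray. -/
def LongRay.toCLR : LongRay → ClosedLongRay := Subtype.val

/-- The long line `𝕃`: an order-reversed copy of `𝕃₊` placed below the closed long ray
`𝕃≥0`, with the order topology. -/
def LongLine : Type 1 := (OrderDual LongRay) ⊕ₗ ClosedLongRay

instance : LinearOrder LongLine :=
  inferInstanceAs (LinearOrder ((OrderDual LongRay) ⊕ₗ ClosedLongRay))

instance : TopologicalSpace LongLine := Preorder.topology LongLine

instance : OrderTopology LongLine := ⟨rfl⟩

/-- The identification of `𝕃₊` with the set of positive elements of `𝕃`. -/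
def LongRay.inL (a : LongRay) : LongLine := toLex (Sum.inr a.toCLR)

/-- The natural order-reversing involution `x ↦ -x` of the long line, exchanging the two
copies of `𝕃₊` and fixing the least element `0` of `𝕃≥0`. -/
noncomputable def LongLine.neg (x : LongLine) : LongLine :=
  match ofLex x with
  | Sum.inl a => toLex (Sum.inr (OrderDual.ofDual a).toCLR)
  | Sum.inr b =>
      @dite _ (∃ y, y < b) (Classical.dec _)
        (fun h => toLex (Sum.inl (OrderDual.toDual (⟨b, h⟩ : LongRay))))
        (fun _ => x)

/-- A subset of the long ray is a *club* if it is closed (in the topology of `𝕃₊`) and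
unbounded (i.e. cofinal). -/
def ClubInLongRay (C : Set LongRay) : Prop :=
  IsClosed C ∧ ∀ β : LongRay, ∃ α ∈ C, β ≤ α

/-- A topological space `X` is *squat* if every continuous map `𝕃₊ → X` is eventually
constant. -/
def Squat (X : Type*) [TopologicalSpace X] : Prop :=
  ∀ f : LongRay → X, Continuous f → ∃ (β : LongRay) (x : X), ∀ α, β ≤ α → f α = x

/-! ### Manifolds and foliations -/

/-- A (topological) `n`-manifold: a nonempty Hausdorff space in which every point has an
open neighbourhood homeomorphic to `ℝⁿ`. -/
def IsTopManifold (M : Type u) [TopologicalSpace M] (n : ℕ) : Prop :=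
  Nonempty M ∧ T2Space M ∧
    ∀ x : M, ∃ U : Set M, x ∈ U ∧ IsOpen U ∧ Nonempty (U ≃ₜ (Fin n → ℝ))

/-- A foliation of dimension `p` and codimension `q` on a space `M`: a family of charts
`φᵢ : Uᵢ ≃ₜ ℝᵖ × ℝ^q` on open sets covering `M` such that all coordinate transformations
have the form `(x, y) ↦ (g (x, y), h y)`, i.e. the last `q` coordinates of the image
depend only on the last `q` coordinates of the argument. -/
structure Foliation (M : Type u) [TopologicalSpace M] (p q : ℕ) where
  /-- index type of the atlas -/
  ι : Type u
  /-- chart domains -/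
  U : ι → Set M
  /-- the charts -/
  chart : (i : ι) → ((U i) ≃ₜ ((Fin p → ℝ) × (Fin q → ℝ)))
  isOpen : ∀ i, IsOpen (U i)
  covers : ∀ x : M, ∃ i, x ∈ U i
  compat : ∀ i j (x y : M) (hxi : x ∈ U i) (hxj : x ∈ U j) (hyi : y ∈ U i) (hyj : y ∈ U j),
    (chart i ⟨x, hxi⟩).2 = (chart i ⟨y, hyi⟩).2 → (chart j ⟨x, hxj⟩).2 = (chart j ⟨y, hyj⟩).2

namespace Foliation

variable {M : Type u} [TopologicalSpace M] {p q : ℕ}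

/-- The set `φᵢ⁻¹ (ℝᵖ × {y})` in the chart domain `Uᵢ`. -/
def plaqueFibre (F : Foliation M p q) (i : F.ι) (y : Fin q → ℝ) : Set M :=
  {w : M | ∃ hw : w ∈ F.U i, (F.chart i ⟨w, hw⟩).2 = y}

/-- A *plaque* of the foliation: a connected component of a set of the form
`φᵢ⁻¹ (ℝᵖ × {y})`. -/
def IsPlaque (F : Foliation M p q) (P : Set M) : Prop :=
  ∃ (i : F.ι) (y : Fin q → ℝ) (z : M), z ∈ F.plaqueFibre i y ∧
    P = connectedComponentIn (F.plaqueFibre i y) z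

/-- Two points lie in a common plaque. -/
def samePlaque (F : Foliation M p q) (x y : M) : Prop :=
  ∃ P, F.IsPlaque P ∧ x ∈ P ∧ y ∈ P

/-- The leaf relation: the smallest equivalence relation relating any two points that lie
in a common plaque. -/
def leafRel (F : Foliation M p q) : M → M → Prop := Relation.EqvGen F.samePlaque

/-- The *leaves* of the foliation: equivalence classes of the leaf relation. -/
def IsLeaf (F : Foliation M p q) (L : Set M) : Prop :=
  ∃ x : M, L = {y | F.leafRel x y}

/-- The *leaf topology* on a leaf (or any subset) `L`: the topology generated by the
plaques contained in `L`. -/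
def leafTopology (F : Foliation M p q) (L : Set M) : TopologicalSpace L :=
  TopologicalSpace.generateFrom
    {s : Set L | ∃ P, F.IsPlaque P ∧ P ⊆ L ∧ s = Subtype.val ⁻¹' P}

/-- A leaf is *long* if it is not metrisable in its leaf topology. -/
def IsLongLeaf (F : Foliation M p q) (L : Set M) : Prop :=
  F.IsLeaf L ∧ ¬ @TopologicalSpace.MetrizableSpace L (F.leafTopology L)

/-- A subset of `M` is *saturated* by the foliation if it is a union of leaves. -/
def Saturated (F : Foliation M p q) (S : Set M) : Prop :=
  ∀ x ∈ S, ∀ y, F.leafRel x y → y ∈ S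

end Foliation


/-! ### Auxiliary machinery for Statement 11 -/

section Statement11Aux

open TopologicalSpace

/-! #### Omega1 basics -/

private lemma omega1_lt_iff {a b : Omega1} : a < b ↔ a.val < b.val :=
  Subtype.coe_lt_coe.symm

private lemma aleph1_ord_isLimit : Order.IsSuccLimit ((Cardinal.aleph 1).ord) :=
  Cardinal.isSuccLimit_ord (Cardinal.aleph0_le_aleph 1)

/-- The successor inside `ω₁`. -/
private def o1succ (α : Omega1) : Omega1 :=
  ⟨Order.succ α.val, aleph1_ord_isLimit.succ_lt α.2⟩

private lemma o1succ_lt (α : Omega1) : α < o1succ α :=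
  omega1_lt_iff.mpr (Order.lt_succ _)

private lemma lt_o1succ_iff {α β : Omega1} : β < o1succ α ↔ β ≤ α := by
  rw [omega1_lt_iff]
  show β.val < Order.succ α.val ↔ _
  rw [Order.lt_succ_iff]
  exact Subtype.coe_le_coe

/-- Every countable subset of `ω₁` has a strict upper bound. -/
private lemma omega1_bound {s : Set Omega1} (hs : s.Countable) :
    ∃ γ : Omega1, ∀ x ∈ s, x < γ := by
  rcases s.eq_empty_or_nonempty with rfl | hne
  · exact ⟨⟨0, aleph1_ord_isLimit.pos⟩, by simp⟩
  obtain ⟨f, hf⟩ := hs.exists_eq_range hne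
  have hsup : (⨆ n, Order.succ (f n).val) < (Cardinal.aleph 1).ord := by
    refine Cardinal.iSup_lt_ord_of_isRegular Cardinal.isRegular_aleph_one ?_
      (fun n => aleph1_ord_isLimit.succ_lt (f n).2)
    rw [Cardinal.mk_nat]
    exact Cardinal.aleph0_lt_aleph_one
  refine ⟨⟨_, hsup⟩, ?_⟩
  intro x hx
  rw [hf] at hx
  obtain ⟨n, rfl⟩ := hx
  exact omega1_lt_iff.mpr ((Order.lt_succ _).trans_le (Ordinal.le_iSup _ n))

/-- Anything inside the closure of a countable set is contained in some `U γ`. -/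
private lemma bound_of_subset_closure {M : Type} [TopologicalSpace M]
    (U : Omega1 → Set M)
    (hmono : ∀ α β : Omega1, α < β → closure (U α) ⊆ U β)
    (hcover : ∀ x : M, ∃ α, x ∈ U α)
    {S D : Set M} (hD : D.Countable) (hSD : S ⊆ closure D) : ∃ γ, S ⊆ U γ := by
  choose g hg using hcover
  obtain ⟨γ, hγ⟩ := omega1_bound (hD.image g)
  have hDU : D ⊆ U γ := fun d hd =>
    hmono (g d) γ (hγ _ (Set.mem_image_of_mem g hd)) (subset_closure (hg d))
  exact ⟨o1succ γ, fun s hs =>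
    hmono γ (o1succ γ) (o1succ_lt γ) (closure_mono hDU (hSD hs))⟩

/-! #### Plaques -/

namespace Foliation

variable {M : Type} [TopologicalSpace M] {p q : ℕ} (F : Foliation M p q)

lemma plaqueFibre_subset (i : F.ι) (y : Fin q → ℝ) : F.plaqueFibre i y ⊆ F.U i := by
  rintro w ⟨hw, -⟩
  exact hw

lemma plaqueFibre_eq_range (i : F.ι) (y : Fin q → ℝ) :
    F.plaqueFibre i y =
      Set.range (fun a : Fin p → ℝ => (((F.chart i).symm (a, y) : F.U i) : M)) := by
  ext w
  constructor
  · rintro ⟨hw, ht⟩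
    refine ⟨(F.chart i ⟨w, hw⟩).1, ?_⟩
    have h2 : ((F.chart i ⟨w, hw⟩).1, y) = F.chart i ⟨w, hw⟩ := by
      rw [← ht]
    show (((F.chart i).symm ((F.chart i ⟨w, hw⟩).1, y) : F.U i) : M) = w
    rw [h2, Homeomorph.symm_apply_apply]
  · rintro ⟨a, rfl⟩
    refine ⟨((F.chart i).symm (a, y)).2, ?_⟩
    show (F.chart i ((F.chart i).symm (a, y))).2 = y
    rw [Homeomorph.apply_symm_apply]

lemma continuous_plaqueMap (i : F.ι) (y : Fin q → ℝ) :
    Continuous (fun a : Fin p → ℝ => (((F.chart i).symm (a, y) : F.U i) : M)) :=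
  continuous_subtype_val.comp
    ((F.chart i).symm.continuous.comp (continuous_id.prodMk continuous_const))

lemma isPreconnected_plaqueFibre (i : F.ι) (y : Fin q → ℝ) :
    IsPreconnected (F.plaqueFibre i y) := by
  rw [F.plaqueFibre_eq_range i y]
  exact isPreconnected_range (F.continuous_plaqueMap i y)

/-- Plaque fibres are separable as subsets of `M`. -/
lemma plaqueFibre_separable (i : F.ι) (y : Fin q → ℝ) :
    ∃ D : Set M, D.Countable ∧ F.plaqueFibre i y ⊆ closure D := by
  obtain ⟨D0, hD0c, hD0d⟩ := TopologicalSpace.exists_countable_dense (Fin p → ℝ)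
  set c := fun a : Fin p → ℝ => (((F.chart i).symm (a, y) : F.U i) : M) with hc
  refine ⟨c '' D0, hD0c.image c, ?_⟩
  rw [F.plaqueFibre_eq_range i y, ← Set.image_univ, ← hD0d.closure_eq]
  exact (image_closure_subset_closure_image (F.continuous_plaqueMap i y))

lemma isPlaque_plaqueFibre {i : F.ι} {y : Fin q → ℝ} {z : M}
    (hz : z ∈ F.plaqueFibre i y) : F.IsPlaque (F.plaqueFibre i y) :=
  ⟨i, y, z, hz, ((F.isPreconnected_plaqueFibre i y).connectedComponentIn hz).symm⟩

lemma IsPlaque.eq_fibre {F : Foliation M p q} {P : Set M} (h : F.IsPlaque P) :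
    ∃ i y, (F.plaqueFibre i y).Nonempty ∧ P = F.plaqueFibre i y := by
  obtain ⟨i, y, z, hz, rfl⟩ := h
  exact ⟨i, y, ⟨z, hz⟩, (F.isPreconnected_plaqueFibre i y).connectedComponentIn hz⟩

lemma samePlaque_iff {x y : M} :
    F.samePlaque x y ↔ ∃ i, ∃ (hx : x ∈ F.U i) (hy : y ∈ F.U i),
      (F.chart i ⟨x, hx⟩).2 = (F.chart i ⟨y, hy⟩).2 := by
  constructor
  · rintro ⟨P, hP, hxP, hyP⟩
    obtain ⟨i, t, -, rfl⟩ := hP.eq_fibre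
    obtain ⟨hx, hxt⟩ := hxP
    obtain ⟨hy, hyt⟩ := hyP
    exact ⟨i, hx, hy, hxt.trans hyt.symm⟩
  · rintro ⟨i, hx, hy, h⟩
    have hxm : x ∈ F.plaqueFibre i (F.chart i ⟨x, hx⟩).2 := ⟨hx, rfl⟩
    exact ⟨_, F.isPlaque_plaqueFibre hxm, hxm, ⟨hy, h.symm⟩⟩

lemma samePlaque_symm {x y : M} (h : F.samePlaque x y) : F.samePlaque y x := by
  obtain ⟨P, hP, hx, hy⟩ := h
  exact ⟨P, hP, hy, hx⟩

lemma samePlaque_of_mem {P : Set M} (hP : F.IsPlaque P) {x w : M}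
    (hx : x ∈ P) (hw : w ∈ P) : F.samePlaque x w :=
  ⟨P, hP, hx, hw⟩

/-- The key relative-openness fact: the intersection of a plaque fibre with any plaque
is relatively open in the fibre. -/
lemma plaque_inter_open (i : F.ι) (t : Fin q → ℝ) {P' : Set M} (hP' : F.IsPlaque P') :
    ∃ O : Set M, IsOpen O ∧ F.plaqueFibre i t ∩ P' = F.plaqueFibre i t ∩ O := by
  obtain ⟨j, t', -, rfl⟩ := hP'.eq_fibre
  rcases (F.plaqueFibre i t ∩ F.plaqueFibre j t').eq_empty_or_nonempty with he | ⟨w0, hw0⟩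
  · exact ⟨∅, isOpen_empty, by simp [he]⟩
  · refine ⟨F.U j, F.isOpen j, Set.Subset.antisymm
      (fun w hw => ⟨hw.1, F.plaqueFibre_subset j t' hw.2⟩) ?_⟩
    rintro w ⟨⟨hwUi, hwt⟩, hwUj⟩
    obtain ⟨⟨hw0Ui, hw0t⟩, hw0Uj, hw0t'⟩ := hw0
    exact ⟨⟨hwUi, hwt⟩, hwUj,
      (F.compat i j w w0 hwUi hwUj hw0Ui hw0Uj (hwt.trans hw0t.symm)).trans hw0t'⟩

/-- The set of points sharing (in the chart `i`) a transversal coordinate with a point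
of the open set `W` is open. -/
lemma isOpen_chartStep (i : F.ι) {W : Set M} (hW : IsOpen W) :
    IsOpen {w : M | ∃ (hw : w ∈ F.U i) (x : M) (hx : x ∈ F.U i), x ∈ W ∧
      (F.chart i ⟨x, hx⟩).2 = (F.chart i ⟨w, hw⟩).2} := by
  set T : Set (Fin q → ℝ) := Prod.snd '' (F.chart i '' (Subtype.val ⁻¹' W)) with hT
  have hTo : IsOpen T :=
    isOpenMap_snd _ ((F.chart i).isOpenMap _ (hW.preimage continuous_subtype_val))
  have heq : {w : M | ∃ (hw : w ∈ F.U i) (x : M) (hx : x ∈ F.U i), x ∈ W ∧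
      (F.chart i ⟨x, hx⟩).2 = (F.chart i ⟨w, hw⟩).2} =
      Subtype.val '' ((fun u : F.U i => (F.chart i u).2) ⁻¹' T) := by
    ext w
    constructor
    · rintro ⟨hw, x, hx, hxW, hxt⟩
      exact ⟨⟨w, hw⟩, ⟨F.chart i ⟨x, hx⟩, ⟨⟨x, hx⟩, hxW, rfl⟩, hxt⟩, rfl⟩
    · rintro ⟨⟨w', hw'⟩, hmem, rfl⟩
      obtain ⟨pr, ⟨u, huW, hu⟩, hpr⟩ := hmem
      exact ⟨hw', u.val, u.2, huW, by rw [hu, hpr]⟩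
  rw [heq]
  exact (F.isOpen i).isOpenMap_subtype_val _
    (hTo.preimage ((F.chart i).continuous.snd))

/-- One plaque saturation step. -/
def fstep (V : Set M) : Set M := {y | ∃ x ∈ V, F.samePlaque x y}

lemma fstep_closure_subset {S : Set M} (hS : F.Saturated S) :
    F.fstep (closure S) ⊆ closure S := by
  rintro y ⟨x, hx, hsp⟩
  rw [F.samePlaque_iff] at hsp
  obtain ⟨i, hxU, hyU, ht⟩ := hsp
  rw [mem_closure_iff]
  intro W hWo hyW
  have hxN : x ∈ {w : M | ∃ (hw : w ∈ F.U i) (x' : M) (hx' : x' ∈ F.U i), x' ∈ W ∧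
      (F.chart i ⟨x', hx'⟩).2 = (F.chart i ⟨w, hw⟩).2} :=
    ⟨hxU, y, hyU, hyW, ht.symm⟩
  obtain ⟨s, hsN, hsS⟩ :=
    (mem_closure_iff.mp hx) _ (F.isOpen_chartStep i hWo) hxN
  obtain ⟨hsU, w, hwU, hwW, hteq⟩ := hsN
  refine ⟨w, hwW, hS s hsS w (Relation.EqvGen.rel _ _ ?_)⟩
  exact (F.samePlaque_iff).mpr ⟨i, hsU, hwU, hteq.symm⟩

lemma leafRel_mem_closure {S : Set M} (hS : F.Saturated S) {a b : M}
    (h : F.leafRel a b) : a ∈ closure S ↔ b ∈ closure S := by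
  induction h with
  | rel x y hxy =>
    exact ⟨fun hx => F.fstep_closure_subset hS ⟨x, hx, hxy⟩,
      fun hy => F.fstep_closure_subset hS ⟨y, hy, F.samePlaque_symm hxy⟩⟩
  | refl => exact Iff.rfl
  | symm _ _ _ ih => exact ih.symm
  | trans _ _ _ _ _ ih1 ih2 => exact ih1.trans ih2

/-- Second countability of a plaque fibre (as a subspace of `M`). -/
lemma secondCountable_plaqueFibre (i : F.ι) (t : Fin q → ℝ) :
    SecondCountableTopology ↥(F.plaqueFibre i t) := by
  have hemb : Topology.IsEmbedding
      ((F.chart i) ∘ Set.inclusion (F.plaqueFibre_subset i t)) :=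
    (F.chart i).isEmbedding.comp (Topology.IsEmbedding.inclusion _)
  exact hemb.secondCountableTopology

/-- **Key lemma**: every leaf is contained in the closure of a countable set, hence in
some `U γ`. -/
lemma leaf_bound (U : Omega1 → Set M)
    (hmono : ∀ α β : Omega1, α < β → closure (U α) ⊆ U β)
    (hcover : ∀ x : M, ∃ α, x ∈ U α) (x : M)
    (hmetL : @TopologicalSpace.MetrizableSpace {y | F.leafRel x y}
      (F.leafTopology {y | F.leafRel x y})) :
    ∃ γ, {y | F.leafRel x y} ⊆ U γ := by
  set L : Set M := {y | F.leafRel x y} with hLdef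
  letI tL : TopologicalSpace ↥L := F.leafTopology L
  haveI hmL : TopologicalSpace.MetrizableSpace ↥L := hmetL
  haveI hpc : ParacompactSpace ↥L := by
    letI := TopologicalSpace.metrizableSpaceMetric ↥L
    infer_instance
  have hxL : x ∈ L := Relation.EqvGen.refl x
  -- the basic facts about plaques inside `L`
  have key : ∀ P : Set M, F.IsPlaque P → P ⊆ L →
      IsOpen (Subtype.val ⁻¹' P : Set ↥L) ∧ IsLindelof (Subtype.val ⁻¹' P : Set ↥L) ∧
      IsPreconnected (Subtype.val ⁻¹' P : Set ↥L) ∧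
      ∃ D : Set M, D.Countable ∧ P ⊆ closure D := by
    intro P hP hPL
    have hopenP : IsOpen (Subtype.val ⁻¹' P : Set ↥L) :=
      TopologicalSpace.isOpen_generateFrom_of_mem ⟨P, hP, hPL, rfl⟩
    obtain ⟨i, t, -, rfl⟩ := hP.eq_fibre
    -- the inclusion of the fibre (with the `M`-subspace topology) into `(L, tL)`
    have hcont : Continuous (Set.inclusion hPL) := by
      apply continuous_generateFrom_iff.mpr
      rintro s ⟨P', hP', hP'L, rfl⟩
      obtain ⟨O, hOo, hOeq⟩ := F.plaque_inter_open i t hP'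
      have : Set.inclusion hPL ⁻¹' (Subtype.val ⁻¹' P') =
          (Subtype.val ⁻¹' O : Set ↥(F.plaqueFibre i t)) := by
        ext w
        constructor
        · intro hw
          have : (w : M) ∈ F.plaqueFibre i t ∩ O := hOeq ▸ ⟨w.2, hw⟩
          exact this.2
        · intro hw
          have : (w : M) ∈ F.plaqueFibre i t ∩ P' := hOeq.symm ▸ ⟨w.2, hw⟩
          exact this.2
      rw [this]
      exact hOo.preimage continuous_subtype_val
    have hrange : Set.range (Set.inclusion hPL) =
        (Subtype.val ⁻¹' F.plaqueFibre i t : Set ↥L) := by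
      rw [Set.range_inclusion]
      rfl
    haveI := F.secondCountable_plaqueFibre i t
    haveI : PreconnectedSpace ↥(F.plaqueFibre i t) :=
      Subtype.preconnectedSpace (F.isPreconnected_plaqueFibre i t)
    refine ⟨hopenP, ?_, ?_, F.plaqueFibre_separable i t⟩
    · have := (isLindelof_univ (X := ↥(F.plaqueFibre i t))).image hcont
      rwa [Set.image_univ, hrange] at this
    · have := isPreconnected_range hcont
      rwa [hrange] at this
  -- a plaque through every point of `L`
  choose ch hch using fun z : ↥L => F.covers z.val
  set Pl : ↥L → Set M := fun z =>
    F.plaqueFibre (ch z) ((F.chart (ch z) ⟨z.val, hch z⟩).2) with hPldef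
  have hPlz : ∀ z : ↥L, z.val ∈ Pl z := fun z => ⟨hch z, rfl⟩
  have hPlaque : ∀ z, F.IsPlaque (Pl z) := fun z => F.isPlaque_plaqueFibre (hPlz z)
  have hPlL : ∀ z, Pl z ⊆ L := fun z w hw =>
    Relation.EqvGen.trans _ _ _ z.2
      (Relation.EqvGen.rel _ _ (F.samePlaque_of_mem (hPlaque z) (hPlz z) hw))
  set u : ↥L → Set ↥L := fun z => Subtype.val ⁻¹' (Pl z) with hudef
  have uo : ∀ z, IsOpen (u z) := fun z => (key _ (hPlaque z) (hPlL z)).1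
  have ulin : ∀ z, IsLindelof (u z) := fun z => (key _ (hPlaque z) (hPlL z)).2.1
  have uU : ⋃ z, u z = Set.univ :=
    Set.eq_univ_of_forall fun z => Set.mem_iUnion.mpr ⟨z, hPlz z⟩
  obtain ⟨v, vo, vU, vlf, vsub⟩ := precise_refinement u uo uU
  -- each Lindelöf set meets only countably many of the `v k`
  have cnt : ∀ z : ↥L, {k : ↥L | (v k ∩ u z).Nonempty}.Countable := by
    intro z
    choose N hN hNfin using vlf
    obtain ⟨T, hTc, hTsub⟩ :=
      (ulin z).elim_nhds_subcover' (fun w _ => N w) (fun w _ => hN w)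
    have hsub : {k : ↥L | (v k ∩ u z).Nonempty} ⊆
        ⋃ w ∈ T, {k : ↥L | (v k ∩ N w).Nonempty} := by
      rintro k ⟨y, hyv, hyu⟩
      obtain ⟨w, hwT, hyN⟩ := Set.mem_iUnion₂.mp (hTsub hyu)
      exact Set.mem_iUnion₂.mpr ⟨w, hwT, ⟨y, hyv, hyN⟩⟩
    exact ((hTc.biUnion fun w _ => (hNfin w).countable)).mono hsub
  -- reachability
  obtain ⟨k0, hk0⟩ : ∃ k, (⟨x, hxL⟩ : ↥L) ∈ v k :=
    Set.mem_iUnion.mp (vU ▸ Set.mem_univ (⟨x, hxL⟩ : ↥L))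
  set A : ℕ → Set ↥L := fun n =>
    Nat.rec {k0} (fun _ An => {b | ∃ a ∈ An, (v b ∩ v a).Nonempty}) n with hAdef
  have hAc : ∀ n, (A n).Countable := by
    intro n
    induction n with
    | zero => exact Set.countable_singleton k0
    | succ m ih =>
      have hsub : A (m + 1) ⊆ ⋃ a ∈ A m, {b : ↥L | (v b ∩ u a).Nonempty} := by
        rintro b ⟨a, ha, hne⟩
        exact Set.mem_iUnion₂.mpr
          ⟨a, ha, hne.mono (Set.inter_subset_inter_right _ (vsub a))⟩
      exact ((ih.biUnion fun a _ => cnt a)).mono hsub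
  set R : Set ↥L := ⋃ n, A n with hRdef
  have hRc : R.Countable := Set.countable_iUnion hAc
  have hRstep : ∀ a ∈ R, ∀ b, (v b ∩ v a).Nonempty → b ∈ R := by
    intro a ha b hne
    obtain ⟨n, han⟩ := Set.mem_iUnion.mp ha
    exact Set.mem_iUnion.mpr ⟨n + 1, ⟨a, han, hne⟩⟩
  have hk0R : k0 ∈ R := Set.mem_iUnion.mpr ⟨0, rfl⟩
  -- connectivity of (L, tL)
  have hconn : ∀ z : ↥L, z ∈ connectedComponent (⟨x, hxL⟩ : ↥L) := by
    have main : ∀ a b : M, F.leafRel a b → ∀ (ha : a ∈ L) (hb : b ∈ L),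
        connectedComponent (⟨a, ha⟩ : ↥L) = connectedComponent (⟨b, hb⟩ : ↥L) := by
      intro a b h
      induction h with
      | rel a' b' hab =>
        intro ha hb
        obtain ⟨P, hP, haP, hbP⟩ := hab
        have hPL : P ⊆ L := fun w hw =>
          Relation.EqvGen.trans _ _ _ ha
            (Relation.EqvGen.rel _ _ (F.samePlaque_of_mem hP haP hw))
        have hpre : IsPreconnected (Subtype.val ⁻¹' P : Set ↥L) :=
          (key P hP hPL).2.2.1
        have h1 : (⟨b', hb⟩ : ↥L) ∈ connectedComponent (⟨a', ha⟩ : ↥L) :=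
          hpre.subset_connectedComponent (show ((⟨a', ha⟩ : ↥L)) ∈ _ from haP) hbP
        exact connectedComponent_eq h1
      | refl a' => intro ha hb; rfl
      | symm a' b' h' ih => intro ha hb; exact (ih hb ha).symm
      | trans a' b' c' hab hbc ih1 ih2 =>
        intro ha hc
        have hb : b' ∈ L := Relation.EqvGen.trans _ _ _ ha hab
        exact (ih1 ha hb).trans (ih2 hb hc)
    intro z
    have h := main x z.val z.2 hxL z.2
    rw [h]
    exact mem_connectedComponent
  have huniv : IsPreconnected (Set.univ : Set ↥L) := by
    have h : connectedComponent (⟨x, hxL⟩ : ↥L) = Set.univ :=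
      Set.eq_univ_of_forall hconn
    rw [← h]
    exact isPreconnected_connectedComponent
  -- the clopen decomposition
  set W : Set ↥L := ⋃ k ∈ R, v k with hWdef
  set W' : Set ↥L := ⋃ k ∈ Rᶜ, v k with hW'def
  have hWo : IsOpen W := isOpen_biUnion fun k _ => vo k
  have hW'o : IsOpen W' := isOpen_biUnion fun k _ => vo k
  have hcov : (Set.univ : Set ↥L) ⊆ W ∪ W' := by
    intro z _
    obtain ⟨k, hk⟩ := Set.mem_iUnion.mp (vU ▸ Set.mem_univ z)
    by_cases hkR : k ∈ R
    · exact Or.inl (Set.mem_biUnion hkR hk)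
    · exact Or.inr (Set.mem_biUnion hkR hk)
  have hdisj : W ∩ W' = ∅ := by
    rw [Set.eq_empty_iff_forall_notMem]
    rintro z ⟨hzW, hzW'⟩
    obtain ⟨a, haR, hza⟩ := Set.mem_iUnion₂.mp hzW
    obtain ⟨b, hbR, hzb⟩ := Set.mem_iUnion₂.mp hzW'
    exact hbR (hRstep a haR b ⟨z, hzb, hza⟩)
  have hallW : ∀ z : ↥L, z ∈ W := by
    intro z
    rcases hcov (Set.mem_univ z) with h | h
    · exact h
    · exfalso
      obtain ⟨w, hw⟩ := huniv W W' hWo hW'o hcov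
        ⟨⟨x, hxL⟩, Set.mem_univ _, Set.mem_biUnion hk0R hk0⟩
        ⟨z, Set.mem_univ _, h⟩
      rw [Set.eq_empty_iff_forall_notMem] at hdisj
      exact hdisj w hw.2
  -- conclude
  choose Dk hDkc hDkcl using fun z : ↥L => (key _ (hPlaque z) (hPlL z)).2.2.2
  have hLsub : L ⊆ closure (⋃ k ∈ R, Dk k) := by
    intro y hy
    obtain ⟨k, hkR, hkv⟩ := Set.mem_iUnion₂.mp (hallW ⟨y, hy⟩)
    have hyPl : y ∈ Pl k := vsub k hkv
    exact closure_mono (Set.subset_biUnion_of_mem hkR) (hDkcl k hyPl)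
  exact bound_of_subset_closure U hmono hcover
    (hRc.biUnion fun k _ => hDkc k) hLsub

end Foliation

end Statement11Aux

/-- If a manifold `M` decomposes as an increasing `ω₁`-chain of open
separable subsets (continuous at limits) and `ℱ` is a foliation on `M` all of whose
leaves are metrisable in the leaf topology, then the set of `α < ω₁` for which `U α` is
saturated is closed and unbounded in `ω₁`. -/
theorem statement11 (n p q : ℕ) (M : Type) [TopologicalSpace M]
    (hM : IsTopManifold M n) (F : Foliation M p q)
    (U : Omega1 → Set M)
    (hopen : ∀ α, IsOpen (U α))
    (hsep : ∀ α, TopologicalSpace.SeparableSpace (U α))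
    (hmono : ∀ α β : Omega1, α < β → closure (U α) ⊆ U β)
    (hlim : ∀ l : Omega1, Order.IsSuccLimit (Omega1.toOrdinal l) →
      U l = ⋃ (α : Omega1) (_ : α < l), U α)
    (hcover : ∀ x : M, ∃ α, x ∈ U α)
    (hmet : ∀ L, F.IsLeaf L → @TopologicalSpace.MetrizableSpace L (F.leafTopology L)) :
    IsClosed {α : Omega1 | F.Saturated (U α)} ∧
      ∀ β : Omega1, ∃ α : Omega1, F.Saturated (U α) ∧ β ≤ α := by
  constructor
  · -- Closedness
    rw [← isOpen_compl_iff]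
    rw [isOpen_iff_forall_mem_open]
    intro α hα
    rcases Ordinal.zero_or_succ_or_isSuccLimit α.val with h0 | ⟨b, hb⟩ | hlimit
    · -- α is the least element: `{α}` is open
      refine ⟨Set.Iio (o1succ α), ?_, isOpen_Iio, lt_o1succ_iff.mpr le_rfl⟩
      intro β hβ
      have hβα : β = α := by
        have : β.val ≤ α.val := Subtype.coe_le_coe.mpr (lt_o1succ_iff.mp hβ)
        rw [h0, nonpos_iff_eq_zero] at this
        exact Subtype.ext (this.trans h0.symm)
      rw [hβα]
      exact hα
    · -- α is a successor: an interval isolates it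
      have hbω : b < (Cardinal.aleph 1).ord := lt_trans (hb ▸ Order.lt_succ b) α.2
      refine ⟨Set.Ioo ⟨b, hbω⟩ (o1succ α), ?_, isOpen_Ioo,
        ⟨omega1_lt_iff.mpr (by rw [← hb]; exact Order.lt_succ b), o1succ_lt α⟩⟩
      intro β hβ
      have hβα : β = α := by
        apply Subtype.ext
        have h1 : b < β.val := omega1_lt_iff.mp hβ.1
        have h2 : β.val ≤ α.val := Subtype.coe_le_coe.mpr (lt_o1succ_iff.mp hβ.2)
        have h3 : α.val ≤ β.val := by
          rw [← hb]
          exact Order.succ_le_of_lt h1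
        exact le_antisymm h2 h3
      rw [hβα]
      exact hα
    · -- α is a limit
      by_cases hcof : ∀ β : Omega1, β < α → ∃ γ, F.Saturated (U γ) ∧ β < γ ∧ γ < α
      · exfalso
        apply hα
        intro z hz y hy
        rw [hlim α hlimit] at hz ⊢
        obtain ⟨δ, hδα, hzδ⟩ := Set.mem_iUnion₂.mp hz
        obtain ⟨γ, hγSat, hδγ, hγα⟩ := hcof δ hδα
        have hzγ : z ∈ U γ := hmono δ γ hδγ (subset_closure hzδ)
        exact Set.mem_iUnion₂.mpr ⟨γ, hγα, hγSat z hzγ y hy⟩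
      · push_neg at hcof
        obtain ⟨β, hβα, hnone⟩ := hcof
        refine ⟨Set.Ioo β (o1succ α), ?_, isOpen_Ioo, ⟨hβα, o1succ_lt α⟩⟩
        intro γ hγ hγSat
        have hγα : γ ≤ α := lt_o1succ_iff.mp hγ.2
        rcases lt_or_eq_of_le hγα with hlt | heq
        · exact absurd hlt (not_lt.mpr (hnone γ hγSat hγ.1))
        · rw [heq] at hγSat
          exact hα hγSat
  · -- Unboundedness
    intro β
    have hbnd : ∀ α : Omega1, ∃ γ : Omega1, α < γ ∧
        ∀ z ∈ U α, ∀ y, F.leafRel z y → y ∈ U γ := by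
      intro α
      haveI := hsep α
      obtain ⟨D0, hD0c, hD0d⟩ := TopologicalSpace.exists_countable_dense ↥(U α)
      set D : Set M := Subtype.val '' D0 with hDdef
      set S : Set M := {y | ∃ d ∈ D, F.leafRel d y} with hSdef
      have hSsat : F.Saturated S := by
        rintro z ⟨d, hd, hdz⟩ y hzy
        exact ⟨d, hd, Relation.EqvGen.trans _ _ _ hdz hzy⟩
      have hleaf : ∀ d : M, ∃ γ, {y | F.leafRel d y} ⊆ U γ := fun d =>
        F.leaf_bound U hmono hcover d (hmet _ ⟨d, rfl⟩)
      choose gl hgl using hleaf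
      obtain ⟨γ0, hγ0⟩ := omega1_bound ((hD0c.image Subtype.val).image gl)
      have hSsub : S ⊆ U γ0 := by
        rintro y ⟨d, hd, hdy⟩
        exact hmono _ _ (hγ0 _ (Set.mem_image_of_mem gl hd))
          (subset_closure (hgl d hdy))
      have hUcl : U α ⊆ closure S := by
        have hDS : D ⊆ S := fun d hd => ⟨d, hd, Relation.EqvGen.refl d⟩
        have hUD : U α ⊆ closure D := by
          intro z hz
          rw [mem_closure_iff]
          intro W hWo hzW
          obtain ⟨d0, hd0W, hd0D⟩ := hD0d.inter_open_nonempty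
            (Subtype.val ⁻¹' W) (hWo.preimage continuous_subtype_val) ⟨⟨z, hz⟩, hzW⟩
          exact ⟨d0.val, hd0W, Set.mem_image_of_mem _ hd0D⟩
        exact hUD.trans (closure_mono hDS)
      have hsat : ∀ z ∈ U α, ∀ y, F.leafRel z y → y ∈ U (o1succ γ0) := by
        intro z hz y hy
        have hycl : y ∈ closure S := (F.leafRel_mem_closure hSsat hy).mp (hUcl hz)
        exact hmono γ0 (o1succ γ0) (o1succ_lt _) (closure_mono hSsub hycl)
      refine ⟨max (o1succ γ0) (o1succ α),
        lt_of_lt_of_le (o1succ_lt α) (le_max_right _ _), ?_⟩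
      intro z hz y hy
      rcases (le_max_left (o1succ γ0) (o1succ α)).lt_or_eq with h | h
      · exact hmono _ _ h (subset_closure (hsat z hz y hy))
      · rw [← h]
        exact hsat z hz y hy
    choose g hg1 hg2 using hbnd
    set a : ℕ → Omega1 := fun n => Nat.rec β (fun _ x => g x) n with hadef
    have ha : ∀ n, a n < a (n + 1) := fun n => hg1 (a n)
    have hoω : (⨆ n, (a n).val) < (Cardinal.aleph 1).ord := by
      refine Cardinal.iSup_lt_ord_of_isRegular Cardinal.isRegular_aleph_one ?_
        (fun n => (a n).2)
      rw [Cardinal.mk_nat]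
      exact Cardinal.aleph0_lt_aleph_one
    set o : Ordinal := ⨆ n, (a n).val with hodef
    have hlt : ∀ n, (a n).val < o := fun n =>
      lt_of_lt_of_le (omega1_lt_iff.mp (ha n)) (Ordinal.le_iSup _ (n + 1))
    have holim : Order.IsSuccLimit o := by
      rw [Ordinal.isSuccLimit_iff, Order.isSuccPrelimit_iff_succ_lt]
      refine ⟨?_, ?_⟩
      · intro h
        exact absurd (h ▸ hlt 0) (fun h' => not_lt_zero h')
      · intro c hc
        obtain ⟨n, hn⟩ := Ordinal.lt_iSup_iff.mp hc
        exact lt_of_le_of_lt (Order.succ_le_of_lt hn) (hlt n)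
    set αstar : Omega1 := ⟨o, hoω⟩ with hαstar
    have hanlt : ∀ n, a n < αstar := fun n => omega1_lt_iff.mpr (hlt n)
    refine ⟨αstar, ?_, le_of_lt (hanlt 0)⟩
    intro z hz y hy
    rw [hlim αstar holim] at hz ⊢
    obtain ⟨δ, hδ, hzδ⟩ := Set.mem_iUnion₂.mp hz
    obtain ⟨n, hn⟩ := Ordinal.lt_iSup_iff.mp (omega1_lt_iff.mp hδ)
    have hzU : z ∈ U (a n) := hmono δ (a n) (omega1_lt_iff.mpr hn)
      (subset_closure hzδ)
    have hyU : y ∈ U (g (a n)) := hg2 (a n) z hzU y hy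
    exact Set.mem_iUnion₂.mpr ⟨g (a n), hanlt (n + 1), hyU⟩
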